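/- Range characterization: if in addition a₁, …, a_i are linearly independent, then for each 1 ≤ i ≤ m the null space of A_i = (a₁, …, a_i)ᵀ, i.e. {x ∈ ℝⁿ : a_jᵀ x = 0 for all j = 1, …, i}, equals the range of H_{i+1}ᵀ, i.e. {H_{i+1}ᵀ q : q ∈ ℝⁿ}. -/
import Mathlib

open Matrix

lemma vecMulVec_mulVec' {n : ℕ} (u v x : Fin n → ℝ) :
    Matrix.vecMulVec u v *ᵥ x = (v ⬝ᵥ x) • u := by
  ext i
  simp [Matrix.vecMulVec_apply, Matrix.mulVec, dotProduct, Finset.mul_sum,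
    mul_comm, mul_left_comm]

lemma vecMulVec_transpose' {n : ℕ} (u v : Fin n → ℝ) :
    (Matrix.vecMulVec u v)ᵀ = Matrix.vecMulVec v u := by
  ext i j
  simp [Matrix.vecMulVec_apply, mul_comm]

theorem abs_range_characterization
    (m n : ℕ) (hm : 0 < m) (hmn : m ≤ n)
    (a z w p : ℕ → (Fin n → ℝ))
    (H : ℕ → Matrix (Fin n) (Fin n) ℝ)
    (hH1 : IsUnit (H 1))
    (hz : ∀ i, 1 ≤ i → i ≤ m → z i ⬝ᵥ (H i).mulVec (a i) ≠ 0)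
    (hw : ∀ i, 1 ≤ i → i ≤ m → w i ⬝ᵥ (H i).mulVec (a i) ≠ 0)
    (hrec : ∀ i, 1 ≤ i → i ≤ m →
      H (i + 1) = H i - (w i ⬝ᵥ (H i).mulVec (a i))⁻¹ •
        Matrix.vecMulVec ((H i).mulVec (a i)) (Matrix.vecMul (w i) (H i)))
    (hp : ∀ i, 1 ≤ i → i ≤ m → p i = Matrix.mulVec (H i)ᵀ (z i)) :
    ∀ i, 1 ≤ i → i ≤ m →
      LinearIndependent ℝ (fun j : Fin i => a (j.1 + 1)) →
      {x : Fin n → ℝ | ∀ j, 1 ≤ j → j ≤ i → a j ⬝ᵥ x = 0} =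
        Set.range (Matrix.mulVec (H (i + 1))ᵀ) := by
  -- key lemma: H (i+1) kills a j for 1 ≤ j ≤ i ≤ m
  have key : ∀ i, i ≤ m → ∀ j, 1 ≤ j → j ≤ i → H (i + 1) *ᵥ a j = 0 := by
    intro i
    induction i with
    | zero => intro _ j h1 h0; omega
    | succ k ih =>
      intro hk j h1 hj
      have hk1m : k + 1 ≤ m := hk
      have hrec' := hrec (k + 1) (by omega) hk1m
      have hw' := hw (k + 1) (by omega) hk1m
      rcases Nat.lt_or_ge j (k + 1) with hlt | hge
      · have hHkj : H (k + 1) *ᵥ a j = 0 := ih (by omega) j h1 (by omega)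
        rw [hrec', Matrix.sub_mulVec, Matrix.smul_mulVec, vecMulVec_mulVec',
          ← Matrix.dotProduct_mulVec, hHkj]
        simp
      · have hj' : j = k + 1 := by omega
        subst hj'
        rw [hrec', Matrix.sub_mulVec, Matrix.smul_mulVec, vecMulVec_mulVec']
        rw [← Matrix.dotProduct_mulVec]
        rw [smul_smul, inv_mul_cancel₀ hw', one_smul, sub_self]
  intro i hi1 him _
  ext x
  simp only [Set.mem_setOf_eq, Set.mem_range]
  constructor
  · intro hx
    -- q with H 1 ᵀ q = x
    have hdet : IsUnit (H 1)ᵀ.det := by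
      rw [Matrix.det_transpose]
      exact (Matrix.isUnit_iff_isUnit_det _).mp hH1
    set q : Fin n → ℝ := (H 1)ᵀ⁻¹ *ᵥ x with hq
    have hbase : (H 1)ᵀ *ᵥ q = x := by
      rw [hq, Matrix.mulVec_mulVec, Matrix.mul_nonsing_inv _ hdet, Matrix.one_mulVec]
    have claim : ∀ k, k ≤ i → (H (k + 1))ᵀ *ᵥ q = x := by
      intro k
      induction k with
      | zero => intro _; exact hbase
      | succ l ihl =>
        intro hl
        have hil : (H (l + 1))ᵀ *ᵥ q = x := ihl (by omega)
        have hrec' := hrec (l + 1) (by omega) (by omega)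
        have hdp : (H (l + 1) *ᵥ a (l + 1)) ⬝ᵥ q = 0 := by
          rw [← Matrix.vecMul_transpose, ← Matrix.dotProduct_mulVec, hil]
          exact hx (l + 1) (by omega) (by omega)
        rw [hrec', Matrix.transpose_sub, Matrix.transpose_smul, vecMulVec_transpose',
          Matrix.sub_mulVec, Matrix.smul_mulVec, vecMulVec_mulVec', hdp, hil]
        simp
    exact ⟨q, claim i le_rfl⟩
  · rintro ⟨q, rfl⟩ j hj1 hji
    rw [Matrix.dotProduct_mulVec, Matrix.vecMul_transpose,
      key i him j hj1 hji]
    simp
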